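/- If an integer N can be written as N = x² − xy + y² for integers x, y, and p is a prime with p ≡ 2 (mod 3), then the exponent of p in the prime factorization of N is even. -/

import Mathlib

lemma key_lemma (p : ℕ) (hp : p.Prime) (hp3 : p % 3 = 2) (x y : ℤ)
    (h : (p : ℤ) ∣ x ^ 2 - x * y + y ^ 2) : (p : ℤ) ∣ x ∧ (p : ℤ) ∣ y := by
  haveI : Fact p.Prime := ⟨hp⟩
  set a : ZMod p := (x : ZMod p) with ha
  set b : ZMod p := (y : ZMod p) with hb
  have hcast : a ^ 2 - a * b + b ^ 2 = 0 := by
    have := (ZMod.intCast_zmod_eq_zero_iff_dvd _ p).mpr h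
    push_cast at this
    exact this
  have hb0 : b = 0 := by
    by_contra hbne
    set t : ZMod p := a * b⁻¹ with ht
    have ht2 : t ^ 2 = t - 1 := by
      rw [ht]
      field_simp [hbne]
      linear_combination hcast
    have ht0 : t ≠ 0 := by
      intro h0
      rw [h0] at ht2
      have : (1 : ZMod p) = 0 := by linear_combination ht2
      exact one_ne_zero this
    have ht3 : t ^ 3 = -1 := by linear_combination (t + 1) * ht2
    have ht6 : t ^ 6 = 1 := by
      rw [show (6 : ℕ) = 3 * 2 from rfl, pow_mul, ht3]
      norm_num
    have hd6 : orderOf t ∣ 6 := orderOf_dvd_of_pow_eq_one ht6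
    have hdp : orderOf t ∣ p - 1 :=
      orderOf_dvd_of_pow_eq_one (ZMod.pow_card_sub_one_eq_one ht0)
    have h3 : ¬ (3 ∣ orderOf t) := by
      intro h3d
      have h3p : 3 ∣ p - 1 := h3d.trans hdp
      have := hp.two_le
      omega
    have hcop : Nat.Coprime (orderOf t) 3 :=
      ((Nat.Prime.coprime_iff_not_dvd Nat.prime_three).mpr h3).symm
    have hd2 : orderOf t ∣ 2 :=
      Nat.Coprime.dvd_of_dvd_mul_right hcop (by simpa using hd6)
    have ht2' : t ^ 2 = 1 := orderOf_dvd_iff_pow_eq_one.mp hd2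
    have htval : t = 2 := by
      have : t - 1 = 1 := by rw [← ht2, ht2']
      linear_combination this
    have h30 : (3 : ZMod p) = 0 := by
      have : (2 : ZMod p) ^ 2 = 1 := by rw [← htval]; exact ht2'
      linear_combination this
    have hpd : p ∣ 3 := by
      have : ((3 : ℕ) : ZMod p) = 0 := by exact_mod_cast h30
      exact (ZMod.natCast_eq_zero_iff 3 p).mp this
    have := (Nat.prime_dvd_prime_iff_eq hp Nat.prime_three).mp hpd
    omega
  have ha0 : a = 0 := by
    rw [hb0] at hcast
    have : a ^ 2 = 0 := by linear_combination hcast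
    exact pow_eq_zero_iff (by norm_num) |>.mp this
  constructor
  · exact (ZMod.intCast_zmod_eq_zero_iff_dvd x p).mp ha0
  · exact (ZMod.intCast_zmod_eq_zero_iff_dvd y p).mp hb0

lemma aux_lemma (p : ℕ) (hp : p.Prime) (hp3 : p % 3 = 2) :
    ∀ n : ℕ, ∀ N x y : ℤ, N.natAbs ≤ n → N = x ^ 2 - x * y + y ^ 2 → 0 < N →
      Even (padicValInt p N) := by
  haveI : Fact p.Prime := ⟨hp⟩
  intro n
  induction n with
  | zero =>
    intro N x y hle hNe hpos
    have := Int.natAbs_pos.mpr hpos.ne'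
    omega
  | succ n ih =>
    intro N x y hle hNe hpos
    by_cases hdvd : (p : ℤ) ∣ N
    · obtain ⟨hx, hy⟩ := key_lemma p hp hp3 x y (hNe ▸ hdvd)
      obtain ⟨a, rfl⟩ := hx
      obtain ⟨b, rfl⟩ := hy
      set M : ℤ := a ^ 2 - a * b + b ^ 2 with hM
      have hNM : N = (p : ℤ) ^ 2 * M := by rw [hNe]; ring
      have hppos : (0 : ℤ) < (p : ℤ) ^ 2 := by
        have := hp.two_le
        positivity
      have h1 : 0 < (p : ℤ) ^ 2 * M := hNM ▸ hpos
      have hMpos : 0 < M := by nlinarith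
      have hval : padicValInt p N = 2 + padicValInt p M := by
        rw [hNM, padicValInt.mul hppos.ne' hMpos.ne']
        congr 1
        have h2 : ((p : ℤ) ^ 2).natAbs = p ^ 2 := by simp [Int.natAbs_pow]
        rw [padicValInt, h2, padicValNat.prime_pow]
      have hp4 : 4 ≤ p ^ 2 := by nlinarith [hp.two_le]
      have hMabs : M.natAbs ≤ n := by
        have h2 : N.natAbs = p ^ 2 * M.natAbs := by
          rw [hNM, Int.natAbs_mul]
          simp [Int.natAbs_pow]
        have h3 : 4 * M.natAbs ≤ p ^ 2 * M.natAbs := Nat.mul_le_mul_right _ hp4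
        have := Int.natAbs_pos.mpr hMpos.ne'
        omega
      have hev := ih M a b hMabs rfl hMpos
      rw [hval]
      exact even_two.add hev
    · have h0 : padicValInt p N = 0 := by
        apply padicValNat.eq_zero_of_not_dvd
        intro hd
        exact hdvd (Int.dvd_natAbs.mp (Int.natCast_dvd_natCast.mpr hd))
      simp [h0]

theorem stmt_3 (N : ℤ) (x y : ℤ) (hN : N = x ^ 2 - x * y + y ^ 2) (hpos : 0 < N)
    (p : ℕ) (hp : p.Prime) (hp3 : p % 3 = 2) :
    Even (padicValInt p N) :=
  aux_lemma p hp hp3 N.natAbs N x y le_rfl hN hpos
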